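/- Fix integers l ≥ 2 and k ≥ 1, and let F(n) = ∑_{w ∈ [k]^n} q^{#τ(w)} ∈ ℤ[q], where τ = 11⋯1 (l letters). Then for every integer n ≥ l, F(n) = (k - 1 + q)·F(n-1) + (k-1)·(1 - q)·∑_{d=2}^{l-1} F(n-d), as an identity of polynomials in q (for l = 2 the sum over d is empty). -/

import Mathlib

open Polynomial

def letter {n k : ℕ} (w : Fin n → Fin k) (i : ℕ) : ℕ :=
  if h : i < n then (w ⟨i, h⟩ : ℕ) + 1 else 0

def occOnes {n k : ℕ} (l : ℕ) (w : Fin n → Fin k) : ℕ :=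
  ((Finset.range n).filter
    (fun i => i + l ≤ n ∧ ∀ d < l, letter w (i + d) = letter w i)).card

namespace Stmt3Aux

def lastEq {m k : ℕ} (r : ℕ) (w : Fin m → Fin k) : Prop :=
  ∀ j, m ≤ j + r → j < m → letter w j = letter w (m - 1)

instance {m k r : ℕ} : DecidablePred (fun w : Fin m → Fin k => lastEq r w) := fun w =>
  decidable_of_iff (∀ j < m, m ≤ j + r → letter w j = letter w (m - 1)) (by
    unfold lastEq; tauto)

lemma letter_snoc {m k : ℕ} (w : Fin m → Fin k) (a : Fin k) (i : ℕ) :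
    letter (Fin.snoc w a) i = if i < m then letter w i else if i = m then (a : ℕ) + 1 else 0 := by
  unfold letter
  rcases lt_trichotomy i m with h | h | h
  · rw [dif_pos (by omega : i < m + 1), if_pos h, dif_pos h]
    have e : (⟨i, by omega⟩ : Fin (m + 1)) = Fin.castSucc ⟨i, h⟩ := rfl
    rw [e, Fin.snoc_castSucc]
  · subst h
    rw [dif_pos (by omega : i < i + 1), if_neg (lt_irrefl i), if_pos rfl]
    have e : (⟨i, by omega⟩ : Fin (i + 1)) = Fin.last i := rfl
    rw [e, Fin.snoc_last]
  · rw [dif_neg (by omega), if_neg (by omega), if_neg (by omega)]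

lemma occ_snoc {m k : ℕ} (l : ℕ) (hl : 2 ≤ l) (w : Fin m → Fin k) (a : Fin k) :
    occOnes l (Fin.snoc w a)
      = occOnes l w +
        if l ≤ m + 1 ∧ lastEq (l - 1) w ∧ (a : ℕ) + 1 = letter w (m - 1) then 1 else 0 := by
  unfold occOnes
  have key : (Finset.range (m + 1)).filter
        (fun i => i + l ≤ m + 1 ∧ ∀ d < l, letter (Fin.snoc w a) (i + d) = letter (Fin.snoc w a) i)
      = ((Finset.range m).filter
          (fun i => i + l ≤ m ∧ ∀ d < l, letter w (i + d) = letter w i))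
        ∪ (if l ≤ m + 1 ∧ lastEq (l - 1) w ∧ (a : ℕ) + 1 = letter w (m - 1)
            then {m + 1 - l} else ∅) := by
    ext i
    simp only [Finset.mem_filter, Finset.mem_range, Finset.mem_union]
    constructor
    · rintro ⟨hi, hil, hall⟩
      by_cases hc : i + l ≤ m
      · left
        refine ⟨by omega, hc, fun d hd => ?_⟩
        have h1 := hall d hd
        rw [letter_snoc, letter_snoc, if_pos (by omega), if_pos (by omega)] at h1
        exact h1
      · -- i + l = m + 1
        right
        have hil' : i + l = m + 1 := by omega
        have hcond : l ≤ m + 1 ∧ lastEq (l - 1) w ∧ (a : ℕ) + 1 = letter w (m - 1) := by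
          have him : i < m := by omega
          have hlast : letter (Fin.snoc w a) (i + (l - 1)) = letter w i := by
            have := hall (l - 1) (by omega)
            rw [letter_snoc w a i, if_pos him] at this
            exact this
          rw [letter_snoc, if_neg (by omega), if_pos (by omega)] at hlast
          have hm1 : letter w (m - 1) = letter w i := by
            have := hall (l - 2) (by omega)
            rw [letter_snoc, letter_snoc, if_pos (by omega), if_pos him] at this
            have e : i + (l - 2) = m - 1 := by omega
            rw [e] at this
            exact this
          refine ⟨by omega, fun j hj1 hj2 => ?_, by omega⟩
          have hd := hall (j - i) (by omega)
          rw [letter_snoc, letter_snoc, if_pos (by omega), if_pos him] at hd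
          have e : i + (j - i) = j := by omega
          rw [e] at hd
          rw [hd, hm1]
        rw [if_pos hcond]
        simp only [Finset.mem_singleton]
        omega
    · rintro (⟨hi, hil, hall⟩ | h)
      · refine ⟨by omega, by omega, fun d hd => ?_⟩
        rw [letter_snoc, letter_snoc, if_pos (by omega), if_pos (by omega)]
        exact hall d hd
      · by_cases hcond : l ≤ m + 1 ∧ lastEq (l - 1) w ∧ (a : ℕ) + 1 = letter w (m - 1)
        · rw [if_pos hcond] at h
          simp only [Finset.mem_singleton] at h
          subst h
          obtain ⟨h1, h2, h3⟩ := hcond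
          refine ⟨by omega, by omega, fun d hd => ?_⟩
          rw [letter_snoc, letter_snoc, if_pos (by omega : m + 1 - l < m)]
          have hival : letter w (m + 1 - l) = letter w (m - 1) :=
            h2 (m + 1 - l) (by omega) (by omega)
          by_cases hdm : m + 1 - l + d < m
          · rw [if_pos hdm]
            have := h2 (m + 1 - l + d) (by omega) hdm
            rw [this, hival]
          · rw [if_neg hdm, if_pos (by omega)]
            rw [hival, h3]
        · rw [if_neg hcond] at h
          simp at h
  rw [key, Finset.card_union_of_disjoint]
  · congr 1
    by_cases hcond : l ≤ m + 1 ∧ lastEq (l - 1) w ∧ (a : ℕ) + 1 = letter w (m - 1)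
    · rw [if_pos hcond, if_pos hcond, Finset.card_singleton]
    · rw [if_neg hcond, if_neg hcond, Finset.card_empty]
  · intro s hs1 hs2
    change (_ : Finset ℕ) ⊆ _ at hs1 hs2 ⊢
    intro x hx
    have h1 := hs1 hx
    have h2 := hs2 hx
    simp only [Finset.mem_filter, Finset.mem_range] at h1
    by_cases hcond : l ≤ m + 1 ∧ lastEq (l - 1) w ∧ (a : ℕ) + 1 = letter w (m - 1)
    · rw [if_pos hcond] at h2
      simp only [Finset.mem_singleton] at h2
      omega
    · rw [if_neg hcond] at h2
      simpa using h2

lemma lastEq_mono {m k r r' : ℕ} (h : r' ≤ r) {w : Fin m → Fin k} (H : lastEq r w) :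
    lastEq r' w := fun j hj1 hj2 => H j (by omega) hj2

lemma lastEq_snoc {m k r : ℕ} (hr : 2 ≤ r) (hm : 1 ≤ m) (v : Fin m → Fin k) (a : Fin k) :
    lastEq r (Fin.snoc v a) ↔ lastEq (r - 1) v ∧ (a : ℕ) + 1 = letter v (m - 1) := by
  unfold lastEq
  simp only [Nat.add_sub_cancel]
  have hla : letter (Fin.snoc v a) m = (a : ℕ) + 1 := by
    rw [letter_snoc, if_neg (lt_irrefl m), if_pos rfl]
  constructor
  · intro H
    have hm1' : letter v (m - 1) = (a : ℕ) + 1 := by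
      have := H (m - 1) (by omega) (by omega)
      rw [letter_snoc, if_pos (by omega), hla] at this
      exact this
    refine ⟨fun j hj1 hj2 => ?_, hm1'.symm⟩
    have := H j (by omega) (by omega)
    rw [letter_snoc, if_pos (by omega), hla] at this
    rw [this, hm1']
  · rintro ⟨H, ha⟩ j hj1 hj2
    rw [hla]
    by_cases hjm : j < m
    · rw [letter_snoc, if_pos hjm]
      by_cases hje : j = m - 1
      · rw [hje, ← ha]
      · rw [H j (by omega) hjm, ← ha]
    · have hj : j = m := by omega
      rw [hj, hla]

lemma pin {m k : ℕ} (hm : 1 ≤ m) (v : Fin m → Fin k) (a : Fin k) :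
    (a : ℕ) + 1 = letter v (m - 1) ↔ a = v ⟨m - 1, by omega⟩ := by
  unfold letter
  rw [dif_pos (by omega : m - 1 < m)]
  constructor
  · intro h; exact Fin.ext (by omega)
  · intro h; rw [h]

def snocEquiv (m k : ℕ) : ((Fin m → Fin k) × Fin k) ≃ (Fin (m + 1) → Fin k) where
  toFun p := Fin.snoc p.1 p.2
  invFun w := (Fin.init w, w (Fin.last m))
  left_inv p := by simp
  right_inv w := by simp

lemma sum_snoc {M : Type*} [AddCommMonoid M] (m k : ℕ) (g : (Fin (m + 1) → Fin k) → M) :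
    ∑ w : Fin (m + 1) → Fin k, g w = ∑ w : Fin m → Fin k, ∑ a : Fin k, g (Fin.snoc w a) := by
  have e := Fintype.sum_equiv (snocEquiv m k) (fun p => g (Fin.snoc p.1 p.2)) g (fun p => rfl)
  rw [← e, Fintype.sum_prod_type]

lemma sum_ite_pin {k : ℕ} {M : Type*} [AddCommMonoid M] (P : Prop) [Decidable P] (a₀ : Fin k)
    (f : Fin k → M) :
    (∑ a : Fin k, if P ∧ a = a₀ then f a else 0) = if P then f a₀ else 0 := by
  by_cases hP : P <;> simp [hP]

noncomputable def Fp (l k m : ℕ) : ℤ[X] := ∑ w : Fin m → Fin k, (X : ℤ[X]) ^ occOnes l w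

noncomputable def Sp (l r k m : ℕ) : ℤ[X] :=
  ∑ w ∈ Finset.univ.filter (fun w : Fin m → Fin k => lastEq r w), (X : ℤ[X]) ^ occOnes l w

lemma Sp_one (l k m : ℕ) : Sp l 1 k m = Fp l k m := by
  unfold Sp Fp
  rw [Finset.filter_true_of_mem]
  intro w _ j hj1 hj2
  have hj : j = m - 1 := by omega
  rw [hj]

lemma lemA {m : ℕ} (l k : ℕ) (hl : 2 ≤ l) (hm : l ≤ m + 1) :
    Fp l k (m + 1) = C (k : ℤ) * Fp l k m + (X - 1) * Sp l (l - 1) k m := by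
  have hm1 : 1 ≤ m := by omega
  unfold Fp
  rw [sum_snoc]
  have step : ∀ v : Fin m → Fin k,
      (∑ a : Fin k, (X : ℤ[X]) ^ occOnes l (Fin.snoc v a))
        = C (k : ℤ) * (X : ℤ[X]) ^ occOnes l v
          + (if lastEq (l - 1) v then (X - 1) * (X : ℤ[X]) ^ occOnes l v else 0) := by
    intro v
    have hterm : ∀ a : Fin k, (X : ℤ[X]) ^ occOnes l (Fin.snoc v a)
        = (X : ℤ[X]) ^ occOnes l v
          + (if lastEq (l - 1) v ∧ a = v ⟨m - 1, by omega⟩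
              then (X - 1) * (X : ℤ[X]) ^ occOnes l v else 0) := by
      intro a
      rw [occ_snoc l hl v a]
      by_cases hc : lastEq (l - 1) v ∧ (a : ℕ) + 1 = letter v (m - 1)
      · rw [if_pos ⟨hm, hc.1, hc.2⟩, if_pos ⟨hc.1, (pin hm1 v a).mp hc.2⟩]
        ring
      · rw [if_neg (by tauto), if_neg (by rw [pin hm1 v a] at hc; tauto)]
        ring
    rw [Finset.sum_congr rfl (fun a _ => hterm a), Finset.sum_add_distrib,
      Finset.sum_const, Finset.card_univ, Fintype.card_fin, sum_ite_pin]
    congr 1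
    rw [nsmul_eq_mul]
    simp
  rw [Finset.sum_congr rfl (fun v _ => step v), Finset.sum_add_distrib, ← Finset.mul_sum,
    ← Finset.sum_filter, ← Finset.mul_sum]
  rfl

lemma lemK {m : ℕ} (l k : ℕ) (hl : 2 ≤ l) (hml : m + 1 < l) :
    Fp l k (m + 1) = C (k : ℤ) * Fp l k m := by
  unfold Fp
  rw [sum_snoc]
  have step : ∀ v : Fin m → Fin k, ∀ a : Fin k,
      occOnes l (Fin.snoc v a) = occOnes l v := by
    intro v a
    rw [occ_snoc l hl v a, if_neg (fun hcon => absurd hcon.1 (by omega)), add_zero]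
  rw [Finset.sum_congr rfl (fun v _ => Finset.sum_congr rfl (fun a _ => by rw [step v a]))]
  rw [Finset.sum_congr rfl (fun v (_ : v ∈ Finset.univ) => Finset.sum_const _)]
  simp only [Finset.card_univ, Fintype.card_fin, nsmul_eq_mul, ← Finset.mul_sum]
  simp

lemma lemRec {m : ℕ} (l k r : ℕ) (hl : 2 ≤ l) (hr : 2 ≤ r) (hrl : r ≤ l) (hm : 1 ≤ m) :
    Sp l r k (m + 1) = Sp l (r - 1) k m
      + (if l ≤ m + 1 then (X - 1) * Sp l (l - 1) k m else 0) := by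
  unfold Sp
  rw [Finset.sum_filter, sum_snoc]
  have step : ∀ v : Fin m → Fin k,
      (∑ a : Fin k, if lastEq r (Fin.snoc v a) then (X : ℤ[X]) ^ occOnes l (Fin.snoc v a) else 0)
        = if lastEq (r - 1) v then
            (X : ℤ[X]) ^ occOnes l v * (if l ≤ m + 1 ∧ lastEq (l - 1) v then X else 1)
          else 0 := by
    intro v
    have hcond : ∀ a : Fin k,
        lastEq r (Fin.snoc v a) ↔ (lastEq (r - 1) v ∧ a = v ⟨m - 1, by omega⟩) :=
      fun a => (lastEq_snoc hr hm v a).trans (and_congr_right (fun _ => pin hm v a))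
    rw [Finset.sum_congr rfl (fun a _ => if_congr (hcond a) rfl rfl), sum_ite_pin]
    congr 1
    rw [occ_snoc l hl v _]
    have ha0 : ((v ⟨m - 1, by omega⟩ : Fin k) : ℕ) + 1 = letter v (m - 1) := (pin hm v _).mpr rfl
    by_cases hc : l ≤ m + 1 ∧ lastEq (l - 1) v
    · rw [if_pos ⟨hc.1, hc.2, ha0⟩, if_pos hc, pow_succ]
    · rw [if_neg (by tauto), if_neg hc, add_zero, mul_one]
  rw [Finset.sum_congr rfl (fun v _ => step v), ← Finset.sum_filter]
  by_cases hLM : l ≤ m + 1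
  · rw [if_pos hLM]
    have e1 : ∀ v ∈ Finset.univ.filter (fun w : Fin m → Fin k => lastEq (r - 1) w),
        (X : ℤ[X]) ^ occOnes l v * (if l ≤ m + 1 ∧ lastEq (l - 1) v then X else 1)
          = (X : ℤ[X]) ^ occOnes l v
            + (if lastEq (l - 1) v then (X - 1) * (X : ℤ[X]) ^ occOnes l v else 0) := by
      intro v _
      by_cases hv : lastEq (l - 1) v
      · rw [if_pos ⟨hLM, hv⟩, if_pos hv]; ring
      · rw [if_neg (by tauto), if_neg hv]; ring
    rw [Finset.sum_congr rfl e1, Finset.sum_add_distrib]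
    congr 1
    rw [← Finset.sum_filter, Finset.filter_filter]
    have hff : Finset.univ.filter (fun v : Fin m → Fin k => lastEq (r - 1) v ∧ lastEq (l - 1) v)
        = Finset.univ.filter (fun v : Fin m → Fin k => lastEq (l - 1) v) := by
      apply Finset.filter_congr
      intro v _
      exact ⟨fun h => h.2, fun h => ⟨lastEq_mono (by omega) h, h⟩⟩
    rw [hff, ← Finset.mul_sum]
  · rw [if_neg hLM, add_zero]
    have e1 : ∀ v ∈ Finset.univ.filter (fun w : Fin m → Fin k => lastEq (r - 1) w),
        (X : ℤ[X]) ^ occOnes l v * (if l ≤ m + 1 ∧ lastEq (l - 1) v then X else 1)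
          = (X : ℤ[X]) ^ occOnes l v := by
      intro v _
      rw [if_neg (by tauto), mul_one]
    rw [Finset.sum_congr rfl e1]

lemma claimC (l k : ℕ) (hl : 2 ≤ l) :
    ∀ r, 1 ≤ r → r ≤ l - 1 → ∀ m, r ≤ m →
      Sp l r k m
        = Fp l k m - C ((k : ℤ) - 1) * ∑ j ∈ Finset.Icc 1 (r - 1), Fp l k (m - j) := by
  intro r hr
  induction r, hr using Nat.le_induction with
  | base =>
    intro _ m _
    rw [Sp_one, show (1 : ℕ) - 1 = 0 from rfl, Finset.Icc_eq_empty (by omega),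
      Finset.sum_empty, mul_zero, sub_zero]
  | succ r hr ih =>
    intro hrl m hm
    obtain ⟨m', rfl⟩ : ∃ m', m = m' + 1 := ⟨m - 1, by omega⟩
    rw [lemRec l k (r + 1) hl (by omega) (by omega) (by omega), Nat.add_sub_cancel,
      ih (by omega) m' (by omega)]
    have hCk : C ((k : ℤ) - 1) = C (k : ℤ) - 1 := by simp
    have hsum : ∑ j ∈ Finset.Icc 1 r, Fp l k (m' + 1 - j)
        = Fp l k m' + ∑ j ∈ Finset.Icc 1 (r - 1), Fp l k (m' - j) := by
      rw [← Finset.Ico_add_one_right_eq_Icc, Finset.sum_Ico_eq_sum_range, ← Finset.Ico_add_one_right_eq_Icc,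
        Finset.sum_Ico_eq_sum_range]
      rw [show r + 1 - 1 = (r - 1) + 1 from by omega, Finset.sum_range_succ']
      simp only [show ∀ i : ℕ, m' + 1 - (1 + (i + 1)) = m' - (1 + i) from fun i => by omega,
        show m' + 1 - (1 + 0) = m' from by omega]
      rw [show r - 1 + 1 - 1 = r - 1 from by omega, add_comm]
    by_cases hLM : l ≤ m' + 1
    · rw [if_pos hLM, lemA l k hl hLM, hsum, hCk]
      ring
    · rw [if_neg hLM, add_zero, lemK l k hl (by omega), hsum, hCk]
      ring

lemma reidx (l k m : ℕ) (hl : 2 ≤ l) :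
    ∑ d ∈ Finset.Icc 2 (l - 1), Fp l k (m + 1 - d)
      = ∑ j ∈ Finset.Icc 1 (l - 2), Fp l k (m - j) := by
  rw [← Finset.Ico_add_one_right_eq_Icc, Finset.sum_Ico_eq_sum_range, ← Finset.Ico_add_one_right_eq_Icc,
    Finset.sum_Ico_eq_sum_range]
  rw [show l - 1 + 1 - 2 = l - 2 + 1 - 1 from by omega]
  exact Finset.sum_congr rfl (fun i _ => by congr 1; omega)

end Stmt3Aux

theorem stmt3 (l k : ℕ) (hl : 2 ≤ l) (hk : 1 ≤ k) (F : ℕ → ℤ[X])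
    (hF : ∀ n, F n = ∑ w : Fin n → Fin k, (X : ℤ[X]) ^ occOnes l w) :
    ∀ n : ℕ, l ≤ n →
      F n = (C ((k : ℤ) - 1) + X) * F (n - 1) +
        C ((k : ℤ) - 1) * (1 - X) * ∑ d ∈ Finset.Icc 2 (l - 1), F (n - d) := by
  have hF' : ∀ s, F s = Stmt3Aux.Fp l k s := hF
  intro n hn
  obtain ⟨m, rfl⟩ : ∃ m, n = m + 1 := ⟨n - 1, by omega⟩
  simp only [hF', Nat.add_sub_cancel]
  rw [Stmt3Aux.lemA l k hl (by omega)]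
  have hC := Stmt3Aux.claimC l k hl (l - 1) (by omega) le_rfl m (by omega)
  rw [hC, show l - 1 - 1 = l - 2 from by omega, Stmt3Aux.reidx l k m hl]
  have hCk : C ((k : ℤ) - 1) = C (k : ℤ) - 1 := by simp
  rw [hCk]
  ring
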